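/- Let X be a smooth and strictly convex reflexive Banach space. The map sending each nonzero x to its unique supporting functional f_x reverses Birkhoff–James orthogonality: x ⊥ y in X if and only if f_y ⊥ f_x in X*. -/

import Mathlib

/-- James-type lemma: BJ orthogonality a ⊥ b gives a norming functional of a vanishing at b. -/
lemma james_aux {𝕜 E : Type*} [RCLike 𝕜] [NormedAddCommGroup E] [NormedSpace 𝕜 E]
    (a b : E) (ha : a ≠ 0) (h : ∀ l : 𝕜, ‖a‖ ≤ ‖a + l • b‖) :
    ∃ f : E →L[𝕜] 𝕜, ‖f‖ = 1 ∧ f a = (‖a‖ : 𝕜) ∧ f b = 0 := by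
  set S : Submodule 𝕜 E := Submodule.span 𝕜 {b} with hSdef
  haveI : FiniteDimensional 𝕜 S := by
    apply FiniteDimensional.span_of_finite
    exact Set.finite_singleton b
  haveI hcl : IsClosed (S : Set E) := Submodule.closed_of_finiteDimensional S
  -- key norm computation: ‖mk a‖ = ‖a‖
  have hnorm : ‖(Submodule.Quotient.mk a : E ⧸ S)‖ = ‖a‖ := by
    refine le_antisymm (Submodule.Quotient.norm_mk_le S a) ?_
    by_contra hlt
    push_neg at hlt
    obtain ⟨m, hm, hmlt⟩ := Submodule.Quotient.norm_mk_lt (Submodule.Quotient.mk a : E ⧸ S)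
      (sub_pos.mpr hlt)
    -- m represents mk a, so m = a + s with s ∈ S, i.e. m = a + l • b
    have hmem : m - a ∈ S := (Submodule.Quotient.eq S).mp hm
    rw [hSdef, Submodule.mem_span_singleton] at hmem
    obtain ⟨l, hl⟩ := hmem
    have : m = a + l • b := by rw [hl]; abel
    have h1 : ‖a‖ ≤ ‖m‖ := this ▸ h l
    linarith
  have hane : (Submodule.Quotient.mk a : E ⧸ S) ≠ 0 := by
    intro h0
    rw [h0, norm_zero] at hnorm
    exact ha (norm_eq_zero.mp hnorm.symm)
  obtain ⟨g, hg1, hga⟩ := exists_dual_vector 𝕜 (Submodule.Quotient.mk a : E ⧸ S) (norm_ne_zero_iff.mpr hane)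
  -- quotient map as a continuous linear map
  let mkC : E →L[𝕜] E ⧸ S := S.mkQ.mkContinuous 1 (fun z => by
    simpa using Submodule.Quotient.norm_mk_le S z)
  refine ⟨g.comp mkC, ?_, ?_, ?_⟩
  · refine le_antisymm ?_ ?_
    · refine ContinuousLinearMap.opNorm_le_bound _ zero_le_one fun z => ?_
      have h1 : ‖mkC z‖ ≤ ‖z‖ := by exact Submodule.Quotient.norm_mk_le S z
      calc ‖g (mkC z)‖ ≤ ‖g‖ * ‖mkC z‖ := g.le_opNorm _
        _ = ‖mkC z‖ := by rw [hg1, one_mul]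
        _ ≤ ‖z‖ := h1
        _ = 1 * ‖z‖ := (one_mul _).symm
    · have : ‖(g.comp mkC) a‖ = ‖a‖ := by
        show ‖g (Submodule.Quotient.mk a : E ⧸ S)‖ = ‖a‖
        rw [hga, hnorm]
        simp
      have hle := (g.comp mkC).le_opNorm a
      rw [this] at hle
      have hapos : (0:ℝ) < ‖a‖ := norm_pos_iff.mpr ha
      exact le_of_mul_le_mul_right (by linarith) hapos
  · show g (Submodule.Quotient.mk a : E ⧸ S) = _
    rw [hga, hnorm]
  · show g (Submodule.Quotient.mk b : E ⧸ S) = 0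
    have : (Submodule.Quotient.mk b : E ⧸ S) = 0 := by
      rw [Submodule.Quotient.mk_eq_zero]
      exact Submodule.mem_span_singleton_self b
    rw [this, map_zero]

theorem stmt_18 {𝕜 X : Type*} [RCLike 𝕜] [NormedAddCommGroup X] [NormedSpace 𝕜 X]
    [CompleteSpace X]
    (hrefl : Function.Surjective (NormedSpace.inclusionInDoubleDual 𝕜 X))
    (hsmooth : ∀ x : X, x ≠ 0 → ∃! f : X →L[𝕜] 𝕜, ‖f‖ = 1 ∧ f x = (‖x‖ : 𝕜))
    (hsc : ∀ u v : X, ‖u‖ = 1 → ‖v‖ = 1 → u ≠ v → ‖u + v‖ < 2)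
    {x y : X} (hx : x ≠ 0) (hy : y ≠ 0)
    {fx fy : X →L[𝕜] 𝕜} (hfx : ‖fx‖ = 1 ∧ fx x = (‖x‖ : 𝕜))
    (hfy : ‖fy‖ = 1 ∧ fy y = (‖y‖ : 𝕜)) :
    (∀ l : 𝕜, ‖x + l • y‖ ≥ ‖x‖) ↔ (∀ l : 𝕜, ‖fy + l • fx‖ ≥ ‖fy‖) := by
  obtain ⟨hfx1, hfxx⟩ := hfx
  obtain ⟨hfy1, hfyy⟩ := hfy
  have hypos : (0:ℝ) < ‖y‖ := norm_pos_iff.mpr hy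
  constructor
  · intro h
    obtain ⟨f, hf1, hfa, hfb⟩ := james_aux x y hx (fun l => h l)
    have : f = fx := by
      obtain ⟨g, hg, hgu⟩ := hsmooth x hx
      rw [hgu f ⟨hf1, hfa⟩, hgu fx ⟨hfx1, hfxx⟩]
    have hfxy : fx y = 0 := this ▸ hfb
    intro l
    have key : ‖(fy + l • fx) y‖ = ‖y‖ := by
      simp [ContinuousLinearMap.add_apply, ContinuousLinearMap.smul_apply, hfxy, hfyy]
    have hle := (fy + l • fx).le_opNorm y
    rw [key] at hle
    rw [hfy1]
    have := le_of_mul_le_mul_right (by linarith : 1 * ‖y‖ ≤ ‖fy + l • fx‖ * ‖y‖) hypos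
    linarith
  · intro h
    have hfyne : fy ≠ 0 := by
      intro h0; rw [h0, norm_zero] at hfy1; exact one_ne_zero hfy1.symm
    obtain ⟨Φ, hΦ1, hΦfy, hΦfx⟩ := james_aux fy fx hfyne (fun l => h l)
    obtain ⟨u, hu⟩ := hrefl Φ
    have hunorm : ‖u‖ = 1 := by
      have := (NormedSpace.inclusionInDoubleDualLi 𝕜 (E := X)).norm_map u
      rw [show (NormedSpace.inclusionInDoubleDualLi 𝕜 (E := X)) u
          = NormedSpace.inclusionInDoubleDual 𝕜 X u from rfl, hu, hΦ1] at this
      exact this.symm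
    have hfyu : fy u = 1 := by
      have : Φ fy = fy u := by rw [← hu]; rfl
      rw [this.symm, hΦfy, hfy1]; norm_num
    have hfxu : fx u = 0 := by
      have : Φ fx = fx u := by rw [← hu]; rfl
      rw [← this, hΦfx]
    set v : X := (‖y‖⁻¹ : 𝕜) • y with hv
    have hvnorm : ‖v‖ = 1 := by
      rw [hv, norm_smul]
      simp [norm_inv, RCLike.norm_ofReal, abs_of_pos hypos]
      field_simp
    have hfyv : fy v = 1 := by
      rw [hv, map_smul, hfyy, smul_eq_mul]
      rw [← RCLike.ofReal_inv, ← RCLike.ofReal_mul]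
      rw [inv_mul_cancel₀ (ne_of_gt hypos)]
      simp
    have huv : u = v := by
      by_contra hne
      have h2 : ‖u + v‖ < 2 := hsc u v hunorm hvnorm hne
      have : ‖fy (u + v)‖ = 2 := by
        rw [map_add, hfyu, hfyv]
        norm_num
      have hle := fy.le_opNorm (u + v)
      rw [this, hfy1, one_mul] at hle
      linarith
    have hfxy : fx y = 0 := by
      have : fx v = 0 := huv ▸ hfxu
      rw [hv, map_smul, smul_eq_mul] at this
      rcases mul_eq_zero.mp this with h1 | h2
      · rw [inv_eq_zero, RCLike.ofReal_eq_zero] at h1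
        exact absurd h1 hypos.ne'
      · exact h2
    intro l
    have key : ‖fx (x + l • y)‖ = ‖x‖ := by
      simp [map_add, map_smul, hfxy, hfxx, smul_eq_mul]
    have hle := fx.le_opNorm (x + l • y)
    rw [key, hfx1, one_mul] at hle
    exact hle
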